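/- Fix a stack s_x, a finite heap h, and a PSeqSL formula φ, and let T(s_x,h,φ) be the quantifier-free sequence-logic formula obtained by the inductive reduction: T(s_x,h,t_{x1}=t_{x2}) = (t_{x1}==t_{x2}); T(s_x,h,t_{α1}==t_{α2}) = (t_{α1}==t_{α2}); T(s_x,h,false) = false; T(s_x,h,φ1⇒φ2) = T(s_x,h,φ1) ⇒ T(s_x,h,φ2); T(s_x,h,emp) = the truth value of dom(h)=∅; T(s_x,h,x↦t_α) = the truth value of (dom(h)={s_x(x)} and s_x(x)∉Atoms) conjoined with the word equation h(s_x(x)) == t_α; T(s_x,h,φ1*φ2) = the disjunction over all splittings h = h1 ⊎ h2 of T(s_x,h1,φ1) ∧ T(s_x,h2,φ2); T(s_x,h,φ1-*φ2) = the conjunction over all heaps h_φ with dom(h_φ) ∩ dom(h) = ∅, dom(h_φ) ⊆ D and rng(h_φ) ⊆ R (D and R the finite sets from the small-model property of -*) of T(s_x,h_φ,φ1) ⇒ T(s_x,h_φ ⊎ h,φ2). Then: there exists an assignment s_α of sequence variables such that (s_x,s_α,h) ⊨ φ if and only if T(s_x,h,φ) is satisfiable, i.e., there exists an assignment of words to its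 sequence variables making it true. -/

import Mathlib

/-! Common framework for sequence-heap separation logic (SeqSL / PSeqSL).

Values: `Sum.inl n` is an element of `Loc ∪ Val = ℕ` (locations are the
naturals), `Sum.inr` is one of the two atoms `nil` and `#`.  A heap is a
finite partial map from locations to finite sequences of values. -/

inductive SAtom : Type
  | anil : SAtom
  | ahash : SAtom
deriving DecidableEq

abbrev SVal : Type := ℕ ⊕ SAtom

abbrev Word : Type := List SVal

abbrev Heap : Type := Finmap fun _ : ℕ => Word

/-- Program-variable terms: `nil`, `#`, or a program variable. -/
inductive PTerm : Type
  | nil : PTerm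
  | hash : PTerm
  | pvar : ℕ → PTerm
deriving DecidableEq

/-- Sequence terms: `ε`, an individual term, a sequence variable, or a
concatenation. -/
inductive STerm : Type
  | eps : STerm
  | atom : PTerm → STerm
  | svar : ℕ → STerm
  | conc : STerm → STerm → STerm
deriving DecidableEq

/-- PSeqSL formulas. -/
inductive PFormula : Type
  | eqx : PTerm → PTerm → PFormula
  | eqs : STerm → STerm → PFormula
  | fls : PFormula
  | imp : PFormula → PFormula → PFormula
  | emp : PFormula
  | pto : ℕ → STerm → PFormula
  | star : PFormula → PFormula → PFormula
  | wand : PFormula → PFormula → PFormula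
deriving DecidableEq

def PTerm.eval (sx : ℕ → SVal) : PTerm → SVal
  | .nil => Sum.inr SAtom.anil
  | .hash => Sum.inr SAtom.ahash
  | .pvar x => sx x

def STerm.eval (sx : ℕ → SVal) (sa : ℕ → Word) : STerm → Word
  | .eps => []
  | .atom t => [t.eval sx]
  | .svar a => sa a
  | .conc t₁ t₂ => t₁.eval sx sa ++ t₂.eval sx sa

/-- Satisfaction of PSeqSL formulas. -/
def PFormula.Sat (sx : ℕ → SVal) (sa : ℕ → Word) : PFormula → Heap → Prop
  | .eqx t₁ t₂, _ => t₁.eval sx = t₂.eval sx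
  | .eqs t₁ t₂, _ => t₁.eval sx sa = t₂.eval sx sa
  | .fls, _ => False
  | .imp φ₁ φ₂, h => PFormula.Sat sx sa φ₁ h → PFormula.Sat sx sa φ₂ h
  | .emp, h => h = ∅
  | .pto x t, h => ∃ l : ℕ, sx x = Sum.inl l ∧ h = Finmap.singleton l (t.eval sx sa)
  | .star φ₁ φ₂, h => ∃ h₁ h₂ : Heap, h₁.Disjoint h₂ ∧ h = h₁ ∪ h₂ ∧
      PFormula.Sat sx sa φ₁ h₁ ∧ PFormula.Sat sx sa φ₂ h₂
  | .wand φ₁ φ₂, h => ∀ h₁ : Heap, h₁.Disjoint h → PFormula.Sat sx sa φ₁ h₁ →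
      PFormula.Sat sx sa φ₂ (h₁ ∪ h)

/-- Free program variables of a program-variable term. -/
def PTerm.fv : PTerm → Finset ℕ
  | .pvar x => {x}
  | _ => ∅

/-- Free program variables of a sequence term. -/
def STerm.fvx : STerm → Finset ℕ
  | .eps => ∅
  | .atom t => t.fv
  | .svar _ => ∅
  | .conc t₁ t₂ => t₁.fvx ∪ t₂.fvx

/-- Free program variables of a PSeqSL formula. -/
def PFormula.fvx : PFormula → Finset ℕ
  | .eqx t₁ t₂ => t₁.fv ∪ t₂.fv
  | .eqs t₁ t₂ => t₁.fvx ∪ t₂.fvx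
  | .fls => ∅
  | .imp φ₁ φ₂ => φ₁.fvx ∪ φ₂.fvx
  | .emp => ∅
  | .pto x t => {x} ∪ t.fvx
  | .star φ₁ φ₂ => φ₁.fvx ∪ φ₂.fvx
  | .wand φ₁ φ₂ => φ₁.fvx ∪ φ₂.fvx

/-- Free sequence variables of a sequence term. -/
def STerm.fva : STerm → Finset ℕ
  | .eps => ∅
  | .atom _ => ∅
  | .svar a => {a}
  | .conc t₁ t₂ => t₁.fva ∪ t₂.fva

/-- Free sequence variables of a PSeqSL formula. -/
def PFormula.fva : PFormula → Finset ℕ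
  | .eqx _ _ => ∅
  | .eqs t₁ t₂ => t₁.fva ∪ t₂.fva
  | .fls => ∅
  | .imp φ₁ φ₂ => φ₁.fva ∪ φ₂.fva
  | .emp => ∅
  | .pto _ t => t.fva
  | .star φ₁ φ₂ => φ₁.fva ∪ φ₂.fva
  | .wand φ₁ φ₂ => φ₁.fva ∪ φ₂.fva

/-- Size of a PSeqSL formula. -/
def PFormula.sz : PFormula → ℕ
  | .eqx _ _ => 0
  | .eqs _ _ => 0
  | .fls => 0
  | .imp φ₁ φ₂ => max φ₁.sz φ₂.sz
  | .emp => 1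
  | .pto _ _ => 1
  | .star φ₁ φ₂ => φ₁.sz + φ₂.sz
  | .wand _ φ₂ => φ₂.sz

/-- The set of sequence terms (including program-variable terms) occurring in
a PSeqSL formula. -/
def PFormula.seqTerms : PFormula → Finset STerm
  | .eqx t₁ t₂ => {STerm.atom t₁, STerm.atom t₂}
  | .eqs t₁ t₂ => {t₁, t₂}
  | .fls => ∅
  | .imp φ₁ φ₂ => φ₁.seqTerms ∪ φ₂.seqTerms
  | .emp => ∅
  | .pto x t => {STerm.atom (PTerm.pvar x), t}
  | .star φ₁ φ₂ => φ₁.seqTerms ∪ φ₂.seqTerms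
  | .wand φ₁ φ₂ => φ₁.seqTerms ∪ φ₂.seqTerms

/-- The first `k` elements of a set `S ⊆ ℕ`. -/
def firstN (S : Set ℕ) (k : ℕ) : Set ℕ :=
  {l | l ∈ S ∧ Set.ncard {l' ∈ S | l' < l} < k}

/-- Terms of the target sequence logic: constant words and sequence
variables, closed under concatenation. -/
inductive CTerm : Type
  | const : Word → CTerm
  | svar : ℕ → CTerm
  | conc : CTerm → CTerm → CTerm
deriving DecidableEq

def CTerm.eval (sa : ℕ → Word) : CTerm → Word
  | .const w => w
  | .svar a => sa a
  | .conc t₁ t₂ => t₁.eval sa ++ t₂.eval sa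

/-- Embedding of the sequence terms of PSeqSL into the target terms, given
the stack `sx` (individual terms become one-letter constant words). -/
def STerm.embed (sx : ℕ → SVal) : STerm → CTerm
  | .eps => .const []
  | .atom t => .const [t.eval sx]
  | .svar a => .svar a
  | .conc t₁ t₂ => .conc (t₁.embed sx) (t₂.embed sx)

/-- Symbolic heaps: finite partial maps from locations to target terms. -/
abbrev SymHeap : Type := Finmap fun _ : ℕ => CTerm

/-- Truth, under an assignment `sa` of words to the sequence variables, of the
formula `T(sx, H, φ)` obtained by the inductive reduction of PSeqSL to
quantifier-free sequence logic.  The clauses follow the definition of `T`: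
equalities become word equations, `emp` and `x ↦ t` become conditions on the
(symbolic) heap together with a word equation, `*` becomes the disjunction
over all splittings of the heap, and `-*` becomes the conjunction over all
symbolic heaps disjoint from the current one with domain contained in
`D = B ∪ sx(L)` and range contained in
`R = SeqTerms(φ₁ -* φ₂) ∪ {ε, fresh value}`. -/
def Tsat (sx : ℕ → SVal) (sa : ℕ → Word) : PFormula → SymHeap → Prop
  | .eqx t₁ t₂, _ => t₁.eval sx = t₂.eval sx
  | .eqs t₁ t₂, _ => t₁.eval sx sa = t₂.eval sx sa
  | .fls, _ => False
  | .imp φ₁ φ₂, H => Tsat sx sa φ₁ H → Tsat sx sa φ₂ H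
  | .emp, H => H = ∅
  | .pto x t, H => ∃ l : ℕ, sx x = Sum.inl l ∧ H.keys = {l} ∧
      ∃ ct : CTerm, H.lookup l = some ct ∧ ct.eval sa = (t.embed sx).eval sa
  | .star φ₁ φ₂, H => ∃ H₁ H₂ : SymHeap, H₁.Disjoint H₂ ∧ H = H₁ ∪ H₂ ∧
      Tsat sx sa φ₁ H₁ ∧ Tsat sx sa φ₂ H₂
  | .wand φ₁ φ₂, H =>
      ∀ Hφ : SymHeap, Hφ.Disjoint H →
        (∀ l ∈ Hφ.keys,
          l ∈ firstN
    {l' : ℕ | l' ∉ H.keys ∧ ∀ x ∈ φ₁.fvx ∪ φ₂.fvx, sx x ≠ Sum.inl l'}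
              (max φ₁.sz φ₂.sz) ∨
          ∃ x ∈ φ₁.fvx ∪ φ₂.fvx, sx x = Sum.inl l) →
        (∀ (l : ℕ) (ct : CTerm), Hφ.lookup l = some ct →
          (∃ t ∈ φ₁.seqTerms ∪ φ₂.seqTerms, ct = t.embed sx) ∨
            ct = CTerm.const [] ∨
            ∃ w : Word, ct = CTerm.const w ∧
              ∀ t ∈ φ₁.seqTerms ∪ φ₂.seqTerms, (t.embed sx).eval sa ≠ w) →
        Tsat sx sa φ₁ Hφ → Tsat sx sa φ₂ (Hφ ∪ H)
section Infra
open Finmap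

/-- Realize a finmap with key set `s` and values given by `f`. -/
lemma exists_finmap {β : Type} (s : Finset ℕ) (f : ℕ → β) :
    ∃ m : Finmap (fun _ : ℕ => β),
      ∀ l, m.lookup l = if l ∈ s then some (f l) else none := by
  classical
  induction s using Finset.induction_on with
  | empty => exact ⟨∅, fun l => by simp⟩
  | @insert a s ha ih =>
      obtain ⟨m, hm⟩ := ih
      refine ⟨m.insert a (f a), fun l => ?_⟩
      by_cases hl : l = a
      · subst hl; simp [Finmap.lookup_insert]
      · rw [Finmap.lookup_insert_of_ne _ hl, hm]
        simp [hl]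

lemma mem_iff_lookup_ne {β : Type} {m : Finmap (fun _ : ℕ => β)} {l : ℕ} :
    l ∈ m ↔ m.lookup l ≠ none := by
  constructor
  · intro hm hn; exact (Finmap.lookup_eq_none.mp hn) hm
  · intro hn; by_contra hm; exact hn (Finmap.lookup_eq_none.mpr hm)

lemma keys_eq_of_lookup {β : Type} {m : Finmap (fun _ : ℕ => β)} {s : Finset ℕ}
    {f : ℕ → β} (h : ∀ l, m.lookup l = if l ∈ s then some (f l) else none) :
    m.keys = s := by
  classical
  ext l
  rw [Finmap.mem_keys, mem_iff_lookup_ne, h]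
  by_cases hl : l ∈ s <;> simp [hl]

lemma mem_congr_of_lookup {β : Type} {m m' : Finmap (fun _ : ℕ => β)} {l : ℕ}
    (h : m.lookup l = m'.lookup l) : l ∈ m ↔ l ∈ m' := by
  rw [mem_iff_lookup_ne, mem_iff_lookup_ne, h]

lemma lookup_union {β : Type} (m m' : Finmap (fun _ : ℕ => β)) (l : ℕ) :
    (m ∪ m').lookup l = (m.lookup l).or (m'.lookup l) := by
  classical
  by_cases hl : l ∈ m
  · rw [Finmap.lookup_union_left hl]
    obtain ⟨b, hb⟩ := Finmap.mem_iff.mp hl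
    rw [hb]; rfl
  · rw [Finmap.lookup_union_right hl, Finmap.lookup_eq_none.mpr hl]; rfl

/-- Evaluation of the embedding agrees with evaluation of the original term. -/
lemma embed_eval (sx : ℕ → SVal) (sa : ℕ → Word) (t : STerm) :
    (t.embed sx).eval sa = t.eval sx sa := by
  induction t with
  | eps => rfl
  | atom t => rfl
  | svar a => rfl
  | conc t₁ t₂ ih₁ ih₂ => simp [STerm.embed, STerm.eval, CTerm.eval, ih₁, ih₂]

end Infra
section Equiv
open Finmap

/-- Locations of stack variables in a finite set of program variables. -/
def locSet (sx : ℕ → SVal) (s : Finset ℕ) : Finset ℕ :=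
  s.biUnion fun x => match sx x with | .inl l => {l} | .inr _ => ∅

lemma mem_locSet {sx : ℕ → SVal} {s : Finset ℕ} {l : ℕ} :
    l ∈ locSet sx s ↔ ∃ x ∈ s, sx x = Sum.inl l := by
  simp only [locSet, Finset.mem_biUnion]
  constructor
  · rintro ⟨x, hx, hm⟩
    refine ⟨x, hx, ?_⟩
    rcases hsx : sx x with l' | a <;> rw [hsx] at hm
    · simp only [Finset.mem_singleton] at hm; rw [hm]
    · simp at hm
  · rintro ⟨x, hx, hsx⟩
    exact ⟨x, hx, by rw [hsx]; simp⟩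

/-- Number of cells of a heap outside the relevant locations `L`. -/
def outCard (L : Finset ℕ) (h : Heap) : ℕ := (h.keys.filter (fun l => l ∉ L)).card

/-- Heap equivalence: agreement at the relevant locations `L`, and equal
number of other cells up to threshold `n`. -/
def HEquiv (L : Finset ℕ) (n : ℕ) (h h' : Heap) : Prop :=
  (∀ l ∈ L, h.lookup l = h'.lookup l) ∧
    min (outCard L h) n = min (outCard L h') n

lemma HEquiv.symm {L n} {h h' : Heap} (he : HEquiv L n h h') : HEquiv L n h' h :=
  ⟨fun l hl => (he.1 l hl).symm, (he.2).symm⟩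

lemma outCard_union {L : Finset ℕ} {h₁ h₂ : Heap} (hd : h₁.Disjoint h₂) :
    outCard L (h₁ ∪ h₂) = outCard L h₁ + outCard L h₂ := by
  unfold outCard
  rw [Finmap.keys_union, Finset.filter_union, Finset.card_union_of_disjoint]
  rw [Finset.disjoint_left]
  intro a ha hb
  simp only [Finset.mem_filter, Finmap.mem_keys] at ha hb
  exact hd a ha.1 hb.1

lemma outCard_eq_zero {L : Finset ℕ} {h : Heap} (hz : outCard L h = 0)
    {l : ℕ} (hl : l ∈ h) : l ∈ L := by
  by_contra hnl
  have : l ∈ h.keys.filter (fun l => l ∉ L) := by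
    simp [Finset.mem_filter, Finmap.mem_keys, hl, hnl]
  have h2 := Finset.card_pos.mpr ⟨l, this⟩
  unfold outCard at hz
  omega

lemma min_split (c₁ c₂ c' n₁ n₂ : ℕ) (h : min (c₁ + c₂) (n₁ + n₂) = min c' (n₁ + n₂)) :
    ∃ d₁ d₂, d₁ + d₂ = c' ∧ min d₁ n₁ = min c₁ n₁ ∧ min d₂ n₂ = min c₂ n₂ := by
  rcases le_or_gt (n₁ + n₂) (c₁ + c₂) with hc | hc
  · rcases le_or_gt c₁ n₁ with h1 | h1
    · exact ⟨c₁, c' - c₁, by omega, by omega, by omega⟩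
    · exact ⟨c' - min c₂ n₂, min c₂ n₂, by omega, by omega, by omega⟩
  · exact ⟨c₁, c₂, by omega, by omega, by omega⟩

lemma exists_fresh (k : ℕ) (F : Finset ℕ) :
    ∃ t : Finset ℕ, t.card = k ∧ ∀ l ∈ t, l ∉ F := by
  refine ⟨(Finset.range k).image (fun i => i + (F.sup id) + 1), ?_, ?_⟩
  · rw [Finset.card_image_of_injective _ (fun a b h => by omega)]
    exact Finset.card_range k
  · intro a ha hf
    simp only [Finset.mem_image, Finset.mem_range] at ha
    obtain ⟨i, _, rfl⟩ := ha
    have := Finset.le_sup (f := id) hf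
    simp only [id] at this
    omega

lemma heap_eq_empty_iff {h : Heap} : h = ∅ ↔ ∀ l, h.lookup l = none := by
  constructor
  · rintro rfl l; exact Finmap.lookup_empty l
  · intro hl
    apply Finmap.ext_lookup
    intro l
    rw [hl l, Finmap.lookup_empty]
/-- Copy the `L`-part of `src` and add fresh cells at the locations `fr`. -/
lemma copy_heap (L : Finset ℕ) (src : Heap) (fr : Finset ℕ)
    (hfrL : ∀ l ∈ fr, l ∉ L) :
    ∃ m : Heap, (∀ l ∈ L, m.lookup l = src.lookup l) ∧ outCard L m = fr.card ∧
      ∀ l ∈ m, (l ∈ L ∧ l ∈ src) ∨ l ∈ fr := by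
  classical
  set k := (src.keys.filter (fun l => l ∈ L)) ∪ fr with hk
  obtain ⟨m, hm⟩ := exists_finmap k (fun l => (src.lookup l).getD [])
  have hkeys : m.keys = k := keys_eq_of_lookup hm
  have hmemk : ∀ l, l ∈ m ↔ l ∈ k := by
    intro l
    rw [← Finmap.mem_keys, hkeys]
  refine ⟨m, ?_, ?_, ?_⟩
  · intro l hl
    by_cases hls : l ∈ src
    · have hlk : l ∈ k := Finset.mem_union_left _ (by
        simp [Finset.mem_filter, Finmap.mem_keys, hls, hl])
      obtain ⟨w, hw⟩ := Finmap.mem_iff.mp hls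
      rw [hm, if_pos hlk, hw]
      rfl
    · have hlk : l ∉ k := by
        intro hlk
        rcases Finset.mem_union.mp hlk with h1 | h1
        · simp only [Finset.mem_filter, Finmap.mem_keys] at h1
          exact hls h1.1
        · exact hfrL l h1 hl
      rw [hm, if_neg hlk, Finmap.lookup_eq_none.mpr hls]
  · unfold outCard
    rw [hkeys, hk, Finset.filter_union]
    have h1 : (src.keys.filter (fun l => l ∈ L)).filter (fun l => l ∉ L) = ∅ := by
      ext a; simp
    have h2 : fr.filter (fun l => l ∉ L) = fr :=
      Finset.filter_true_of_mem hfrL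
    rw [h1, h2, Finset.empty_union]
  · intro l hl
    rcases Finset.mem_union.mp ((hmemk l).mp hl) with h1 | h1
    · simp only [Finset.mem_filter, Finmap.mem_keys] at h1
      exact Or.inl ⟨h1.2, h1.1⟩
    · exact Or.inr h1

/-- Split `h'` into two parts mirroring the `L`-parts of `h₁` and `h₂` and
with prescribed numbers of cells outside `L`. -/
lemma split_heap (L : Finset ℕ) (h₁ h₂ h' : Heap) (hdis : h₁.Disjoint h₂)
    (heL : ∀ l ∈ L, (h₁ ∪ h₂).lookup l = h'.lookup l)
    (d₁ d₂ : ℕ) (hd : d₁ + d₂ = outCard L h') :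
    ∃ h₁' h₂' : Heap, h₁'.Disjoint h₂' ∧ h' = h₁' ∪ h₂' ∧
      (∀ l ∈ L, h₁.lookup l = h₁'.lookup l) ∧
      (∀ l ∈ L, h₂.lookup l = h₂'.lookup l) ∧
      outCard L h₁' = d₁ ∧ outCard L h₂' = d₂ := by
  classical
  have hmemL : ∀ l ∈ L, (l ∈ h₁ ∪ h₂ ↔ l ∈ h') := fun l hl =>
    mem_congr_of_lookup (heL l hl)
  set out' := h'.keys.filter (fun l => l ∉ L) with hout'
  have hd₁le : d₁ ≤ out'.card := by
    have : outCard L h' = out'.card := rfl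
    omega
  obtain ⟨s₁', hs₁'sub, hs₁'card⟩ := Finset.exists_subset_card_eq hd₁le
  set s₂' := out' \ s₁' with hs₂'def
  have hs₂'sub : s₂' ⊆ out' := Finset.sdiff_subset
  have hs₂'card : s₂'.card = d₂ := by
    rw [hs₂'def, Finset.card_sdiff_of_subset hs₁'sub, hs₁'card]
    have : outCard L h' = out'.card := rfl
    omega
  have houtL : ∀ l ∈ out', l ∉ L := by
    intro l hl; exact (Finset.mem_filter.mp hl).2
  have houtm : ∀ l ∈ out', l ∈ h' := by
    intro l hl; exact Finmap.mem_keys.mp (Finset.mem_filter.mp hl).1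
  set k₁ := (h₁.keys.filter (fun l => l ∈ L)) ∪ s₁' with hk₁
  set k₂ := (h₂.keys.filter (fun l => l ∈ L)) ∪ s₂' with hk₂
  obtain ⟨h₁', hh₁'⟩ := exists_finmap k₁ (fun l => (h'.lookup l).getD [])
  obtain ⟨h₂', hh₂'⟩ := exists_finmap k₂ (fun l => (h'.lookup l).getD [])
  have hk₁keys : h₁'.keys = k₁ := keys_eq_of_lookup hh₁'
  have hk₂keys : h₂'.keys = k₂ := keys_eq_of_lookup hh₂'
  have hmem₁ : ∀ l, l ∈ h₁' ↔ l ∈ k₁ := fun l => by rw [← Finmap.mem_keys, hk₁keys]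
  have hmem₂ : ∀ l, l ∈ h₂' ↔ l ∈ k₂ := fun l => by rw [← Finmap.mem_keys, hk₂keys]
  have hk₁h' : ∀ l ∈ k₁, l ∈ h' := by
    intro l hl
    rcases Finset.mem_union.mp hl with hl | hl
    · simp only [Finset.mem_filter, Finmap.mem_keys] at hl
      exact (hmemL l hl.2).mp (Finmap.mem_union.mpr (Or.inl hl.1))
    · exact houtm l (hs₁'sub hl)
  have hk₂h' : ∀ l ∈ k₂, l ∈ h' := by
    intro l hl
    rcases Finset.mem_union.mp hl with hl | hl
    · simp only [Finset.mem_filter, Finmap.mem_keys] at hl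
      exact (hmemL l hl.2).mp (Finmap.mem_union.mpr (Or.inr hl.1))
    · exact houtm l (hs₂'sub hl)
  have getd : ∀ l, l ∈ h' → some ((h'.lookup l).getD []) = h'.lookup l := by
    intro l hl
    obtain ⟨w, hw⟩ := Finmap.mem_iff.mp hl
    rw [hw]; rfl
  have hlook₁ : ∀ l ∈ k₁, h₁'.lookup l = h'.lookup l := by
    intro l hl
    rw [hh₁' l, if_pos hl]
    exact getd l (hk₁h' l hl)
  have hlook₂ : ∀ l ∈ k₂, h₂'.lookup l = h'.lookup l := by
    intro l hl
    rw [hh₂' l, if_pos hl]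
    exact getd l (hk₂h' l hl)
  have hkdis : ∀ l, l ∈ k₁ → l ∉ k₂ := by
    intro l hl₁ hl₂
    rcases Finset.mem_union.mp hl₁ with ha | ha <;>
      rcases Finset.mem_union.mp hl₂ with hb | hb
    · simp only [Finset.mem_filter, Finmap.mem_keys] at ha hb
      exact hdis l ha.1 hb.1
    · exact houtL l (hs₂'sub hb) (Finset.mem_filter.mp ha).2
    · exact houtL l (hs₁'sub ha) (Finset.mem_filter.mp hb).2
    · exact (Finset.mem_sdiff.mp hb).2 ha
  refine ⟨h₁', h₂', ?_, ?_, ?_, ?_, ?_, ?_⟩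
  · intro l hl₁ hl₂
    exact hkdis l ((hmem₁ l).mp hl₁) ((hmem₂ l).mp hl₂)
  · apply Finmap.ext_lookup
    intro l
    by_cases hl₁ : l ∈ k₁
    · rw [Finmap.lookup_union_left ((hmem₁ l).mpr hl₁)]
      exact (hlook₁ l hl₁).symm
    · by_cases hl₂ : l ∈ k₂
      · rw [Finmap.lookup_union_right (fun hc => hl₁ ((hmem₁ l).mp hc))]
        exact (hlook₂ l hl₂).symm
      · rw [Finmap.lookup_union_right (fun hc => hl₁ ((hmem₁ l).mp hc)),
          Finmap.lookup_eq_none.mpr (fun hc => hl₂ ((hmem₂ l).mp hc)),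
          Finmap.lookup_eq_none]
        intro hlh'
        by_cases hlL : l ∈ L
        · rcases Finmap.mem_union.mp ((hmemL l hlL).mpr hlh') with hc | hc
          · exact hl₁ (Finset.mem_union_left _ (by
              simp [Finset.mem_filter, Finmap.mem_keys, hc, hlL]))
          · exact hl₂ (Finset.mem_union_left _ (by
              simp [Finset.mem_filter, Finmap.mem_keys, hc, hlL]))
        · have hlo : l ∈ out' := by
            simp [hout', Finset.mem_filter, Finmap.mem_keys, hlh', hlL]
          by_cases hls : l ∈ s₁'
          · exact hl₁ (Finset.mem_union_right _ hls)
          · exact hl₂ (Finset.mem_union_right _ (Finset.mem_sdiff.mpr ⟨hlo, hls⟩))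
  · intro l hl
    by_cases hlm : l ∈ h₁
    · have hlk : l ∈ k₁ := Finset.mem_union_left _ (by
        simp [Finset.mem_filter, Finmap.mem_keys, hlm, hl])
      rw [hlook₁ l hlk, ← heL l hl, Finmap.lookup_union_left hlm]
    · rw [Finmap.lookup_eq_none.mpr hlm, eq_comm, Finmap.lookup_eq_none]
      intro hc
      rcases Finset.mem_union.mp ((hmem₁ l).mp hc) with hb | hb
      · exact hlm (Finmap.mem_keys.mp (Finset.mem_filter.mp hb).1)
      · exact houtL l (hs₁'sub hb) hl
  · intro l hl
    by_cases hlm : l ∈ h₂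
    · have hlk : l ∈ k₂ := Finset.mem_union_left _ (by
        simp [Finset.mem_filter, Finmap.mem_keys, hlm, hl])
      rw [hlook₂ l hlk, ← heL l hl,
        Finmap.lookup_union_right (fun hc => hdis l hc hlm)]
    · rw [Finmap.lookup_eq_none.mpr hlm, eq_comm, Finmap.lookup_eq_none]
      intro hc
      rcases Finset.mem_union.mp ((hmem₂ l).mp hc) with hb | hb
      · exact hlm (Finmap.mem_keys.mp (Finset.mem_filter.mp hb).1)
      · exact houtL l (hs₂'sub hb) hl
  · unfold outCard
    rw [hk₁keys, hk₁, Finset.filter_union]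
    have h1 : (h₁.keys.filter (fun l => l ∈ L)).filter (fun l => l ∉ L) = ∅ := by
      ext a; simp
    have h2 : s₁'.filter (fun l => l ∉ L) = s₁' :=
      Finset.filter_true_of_mem (fun l hl => houtL l (hs₁'sub hl))
    rw [h1, h2, Finset.empty_union, hs₁'card]
  · unfold outCard
    rw [hk₂keys, hk₂, Finset.filter_union]
    have h1 : (h₂.keys.filter (fun l => l ∈ L)).filter (fun l => l ∉ L) = ∅ := by
      ext a; simp
    have h2 : s₂'.filter (fun l => l ∉ L) = s₂' :=
      Finset.filter_true_of_mem (fun l hl => houtL l (hs₂'sub hl))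
    rw [h1, h2, Finset.empty_union, hs₂'card]
/-- Satisfaction only depends on the heap up to `HEquiv`. -/
lemma sat_equiv (sx : ℕ → SVal) (sa : ℕ → Word) (φ : PFormula) :
    ∀ (L : Finset ℕ), (∀ x ∈ φ.fvx, ∀ l, sx x = Sum.inl l → l ∈ L) →
    ∀ (n : ℕ), φ.sz ≤ n → ∀ (h h' : Heap), HEquiv L n h h' →
    (PFormula.Sat sx sa φ h ↔ PFormula.Sat sx sa φ h') := by
  classical
  induction φ with
  | eqx t₁ t₂ => intro L _ n _ h h' _; simp [PFormula.Sat]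
  | eqs t₁ t₂ => intro L _ n _ h h' _; simp [PFormula.Sat]
  | fls => intro L _ n _ h h' _; simp [PFormula.Sat]
  | imp φ₁ φ₂ ih₁ ih₂ =>
      intro L hL n hn h h' he
      simp only [PFormula.sz] at hn
      have hL₁ : ∀ x ∈ φ₁.fvx, ∀ l, sx x = Sum.inl l → l ∈ L := fun x hx =>
        hL x (by simp only [PFormula.fvx, Finset.mem_union]; exact Or.inl hx)
      have hL₂ : ∀ x ∈ φ₂.fvx, ∀ l, sx x = Sum.inl l → l ∈ L := fun x hx =>
        hL x (by simp only [PFormula.fvx, Finset.mem_union]; exact Or.inr hx)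
      simp only [PFormula.Sat]
      exact imp_congr (ih₁ L hL₁ n (le_trans (le_max_left _ _) hn) h h' he)
        (ih₂ L hL₂ n (le_trans (le_max_right _ _) hn) h h' he)
  | emp =>
      intro L hL n hn h h' he
      simp only [PFormula.sz] at hn
      have key : ∀ h h' : Heap, HEquiv L n h h' → h = ∅ → h' = ∅ := by
        rintro h h' ⟨heL, hec⟩ rfl
        rw [heap_eq_empty_iff]
        intro l
        by_cases hl : l ∈ L
        · rw [← heL l hl, Finmap.lookup_empty]
        · rw [Finmap.lookup_eq_none]
          intro hmem
          have hz : outCard L (∅ : Heap) = 0 := by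
            simp [outCard]
          have hz' : outCard L h' = 0 := by omega
          exact hl (outCard_eq_zero hz' hmem)
      simp only [PFormula.Sat]
      exact ⟨key h h' he, key h' h he.symm⟩
  | pto x t =>
      intro L hL n hn h h' he
      simp only [PFormula.sz] at hn
      have hx : ∀ l, sx x = Sum.inl l → l ∈ L :=
        hL x (by simp [PFormula.fvx])
      have key : ∀ h h' : Heap, HEquiv L n h h' →
          PFormula.Sat sx sa (.pto x t) h → PFormula.Sat sx sa (.pto x t) h' := by
        rintro h h' ⟨heL, hec⟩ ⟨l, hsx, rfl⟩
        refine ⟨l, hsx, ?_⟩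
        have hlL : l ∈ L := hx l hsx
        have hz : outCard L (Finmap.singleton l (t.eval sx sa) : Heap) = 0 := by
          unfold outCard
          rw [Finmap.keys_singleton, Finset.card_eq_zero]
          ext a
          simp only [Finset.mem_filter, Finset.mem_singleton, Finset.notMem_empty,
            iff_false, not_and]
          rintro rfl
          simp [hlL]
        have hz' : outCard L h' = 0 := by omega
        apply Finmap.ext_lookup
        intro a
        by_cases hal : a = l
        · subst hal
          rw [Finmap.lookup_singleton_eq, ← heL a hlL, Finmap.lookup_singleton_eq]
        · have hra : (Finmap.singleton l (t.eval sx sa) : Heap).lookup a = none := by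
            rw [Finmap.lookup_eq_none, Finmap.mem_singleton]; exact hal
          rw [hra, Finmap.lookup_eq_none]
          intro hmem
          have haL : a ∈ L := outCard_eq_zero hz' hmem
          have := heL a haL
          rw [hra] at this
          exact (Finmap.lookup_eq_none.mp this.symm) hmem
      simp only [PFormula.Sat]
      exact ⟨key h h' he, key h' h he.symm⟩
  | star φ₁ φ₂ ih₁ ih₂ =>
      intro L hL n hn h h' he
      simp only [PFormula.sz] at hn
      have hL₁ : ∀ x ∈ φ₁.fvx, ∀ l, sx x = Sum.inl l → l ∈ L := fun x hx =>
        hL x (by simp only [PFormula.fvx, Finset.mem_union]; exact Or.inl hx)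
      have hL₂ : ∀ x ∈ φ₂.fvx, ∀ l, sx x = Sum.inl l → l ∈ L := fun x hx =>
        hL x (by simp only [PFormula.fvx, Finset.mem_union]; exact Or.inr hx)
      have key : ∀ h h' : Heap, HEquiv L n h h' →
          PFormula.Sat sx sa (.star φ₁ φ₂) h → PFormula.Sat sx sa (.star φ₁ φ₂) h' := by
        rintro h h' ⟨heL, hec⟩ ⟨h₁, h₂, hdis, rfl, hs₁, hs₂⟩
        have hcu : outCard L (h₁ ∪ h₂) = outCard L h₁ + outCard L h₂ :=
          outCard_union hdis
        have hnn : φ₁.sz + (n - φ₁.sz) = n := by omega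
        obtain ⟨d₁, d₂, hdsum, hd₁, hd₂⟩ :=
          min_split (outCard L h₁) (outCard L h₂) (outCard L h') φ₁.sz (n - φ₁.sz)
            (by rw [hnn, ← hcu]; exact hec)
        obtain ⟨h₁', h₂', hdis', huni, heL₁, heL₂, hoc₁, hoc₂⟩ :=
          split_heap L h₁ h₂ h' hdis heL d₁ d₂ hdsum
        refine ⟨h₁', h₂', hdis', huni, ?_, ?_⟩
        · exact (ih₁ L hL₁ φ₁.sz le_rfl h₁ h₁' ⟨heL₁, by rw [hoc₁]; omega⟩).mp hs₁
        · exact (ih₂ L hL₂ (n - φ₁.sz) (by omega) h₂ h₂'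
            ⟨heL₂, by rw [hoc₂]; omega⟩).mp hs₂
      simp only [PFormula.Sat] at *
      exact ⟨key h h' he, key h' h he.symm⟩
  | wand φ₁ φ₂ ih₁ ih₂ =>
      intro L hL n hn h h' he
      simp only [PFormula.sz] at hn
      have hL₁ : ∀ x ∈ φ₁.fvx, ∀ l, sx x = Sum.inl l → l ∈ L := fun x hx =>
        hL x (by simp only [PFormula.fvx, Finset.mem_union]; exact Or.inl hx)
      have hL₂ : ∀ x ∈ φ₂.fvx, ∀ l, sx x = Sum.inl l → l ∈ L := fun x hx =>
        hL x (by simp only [PFormula.fvx, Finset.mem_union]; exact Or.inr hx)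
      have key : ∀ h h' : Heap, HEquiv L n h h' →
          PFormula.Sat sx sa (.wand φ₁ φ₂) h → PFormula.Sat sx sa (.wand φ₁ φ₂) h' := by
        rintro h h' ⟨heL, hec⟩ hsat h₁' hdis' hs₁'
        obtain ⟨fresh, hfc, hfdis⟩ := exists_fresh (outCard L h₁') (h.keys ∪ L)
        have hfrL : ∀ l ∈ fresh, l ∉ L := fun l hl hc =>
          hfdis l hl (Finset.mem_union_right _ hc)
        have hfrh : ∀ l ∈ fresh, l ∉ h := fun l hl hc =>
          hfdis l hl (Finset.mem_union_left _ (Finmap.mem_keys.mpr hc))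
        obtain ⟨h₁, hh₁L, hh₁c, hh₁mem⟩ := copy_heap L h₁' fresh hfrL
        have hdis₁ : h₁.Disjoint h := by
          intro l hl hlh
          rcases hh₁mem l hl with ⟨hlL, hlsrc⟩ | hlf
          · exact hdis' l hlsrc ((mem_congr_of_lookup (heL l hlL)).mp hlh)
          · exact hfrh l hlf hlh
        have hhe₁ : HEquiv L φ₁.sz h₁' h₁ := by
          refine ⟨fun l hl => (hh₁L l hl).symm, ?_⟩
          rw [hh₁c, hfc]
        have hsat₁ : PFormula.Sat sx sa φ₁ h₁ :=
          (ih₁ L hL₁ φ₁.sz le_rfl h₁' h₁ hhe₁).mp hs₁'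
        have hsat₂ : PFormula.Sat sx sa φ₂ (h₁ ∪ h) := hsat h₁ hdis₁ hsat₁
        have hdisf' : h₁'.Disjoint h' := hdis'
        have hhe₂ : HEquiv L n (h₁ ∪ h) (h₁' ∪ h') := by
          constructor
          · intro l hl
            rw [lookup_union, lookup_union, hh₁L l hl, heL l hl]
          · rw [outCard_union hdis₁, outCard_union hdisf', hh₁c, hfc]
            omega
        exact (ih₂ L hL₂ n hn (h₁ ∪ h) (h₁' ∪ h') hhe₂).mp hsat₂
      simp only [PFormula.Sat] at *
      exact ⟨key h h' he, key h' h he.symm⟩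
end Equiv
section HRel

lemma exists_subset_firstN (p : ℕ → Prop) [DecidablePred p]
    (hp : (setOf p).Infinite) (k j : ℕ) (hj : j ≤ k) :
    ∃ t : Finset ℕ, t.card = j ∧ ∀ l ∈ t, l ∈ firstN (setOf p) k := by
  refine ⟨(Finset.range j).image (Nat.nth p), ?_, ?_⟩
  · rw [Finset.card_image_of_injective _ (Nat.nth_injective hp), Finset.card_range]
  · intro l hl
    simp only [Finset.mem_image, Finset.mem_range] at hl
    obtain ⟨i, hi, rfl⟩ := hl
    refine ⟨Nat.nth_mem_of_infinite hp i, ?_⟩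
    have hset : {l' | l' ∈ setOf p ∧ l' < Nat.nth p i} =
        ↑((Finset.range (Nat.nth p i)).filter p) := by
      ext a
      simp only [Set.mem_setOf_eq, Finset.coe_filter, Finset.mem_range, and_comm]
      exact Iff.rfl
    rw [hset, Set.ncard_coe_finset, ← Nat.count_eq_card_filter_range,
      Nat.count_nth_of_infinite hp]
    omega

/-- Correspondence between a symbolic heap and a concrete heap under `sa`. -/
def HRel (sa : ℕ → Word) (H : SymHeap) (h : Heap) : Prop :=
  ∀ l, (H.lookup l).map (CTerm.eval sa) = h.lookup l

lemma HRel.mem {sa : ℕ → Word} {H : SymHeap} {h : Heap} (r : HRel sa H h) (l : ℕ) :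
    l ∈ H ↔ l ∈ h := by
  rw [mem_iff_lookup_ne, mem_iff_lookup_ne, ← r l]
  cases H.lookup l <;> simp

lemma HRel.keys {sa : ℕ → Word} {H : SymHeap} {h : Heap} (r : HRel sa H h) :
    H.keys = h.keys := by
  ext l
  rw [Finmap.mem_keys, Finmap.mem_keys, r.mem l]

lemma HRel.union {sa : ℕ → Word} {H₁ H₂ : SymHeap} {h₁ h₂ : Heap}
    (r₁ : HRel sa H₁ h₁) (r₂ : HRel sa H₂ h₂) : HRel sa (H₁ ∪ H₂) (h₁ ∪ h₂) := by
  intro l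
  rw [lookup_union, lookup_union, ← r₁ l, ← r₂ l]
  cases H₁.lookup l <;> cases H₂.lookup l <;> rfl

lemma HRel.unique {sa : ℕ → Word} {H : SymHeap} {h h' : Heap}
    (r : HRel sa H h) (r' : HRel sa H h') : h = h' :=
  Finmap.ext_lookup fun l => (r l).symm.trans (r' l)

lemma exists_eval_heap (sa : ℕ → Word) (H : SymHeap) : ∃ h : Heap, HRel sa H h := by
  classical
  obtain ⟨h, hh⟩ := exists_finmap H.keys
    (fun l => ((H.lookup l).map (CTerm.eval sa)).getD [])
  refine ⟨h, fun l => ?_⟩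
  by_cases hl : l ∈ H
  · obtain ⟨ct, hct⟩ := Finmap.mem_iff.mp hl
    rw [hh l, if_pos (Finmap.mem_keys.mpr hl), hct]
    rfl
  · rw [hh l, if_neg (fun hc => hl (Finmap.mem_keys.mp hc)),
      Finmap.lookup_eq_none.mpr hl]
    rfl

/-- Restrict a finmap to a subset of its keys. -/
lemma exists_restrict {β : Type} (d : β) (src : Finmap (fun _ : ℕ => β))
    (s : Finset ℕ) (hs : ∀ l ∈ s, l ∈ src) :
    ∃ m : Finmap (fun _ : ℕ => β), m.keys = s ∧
      (∀ l ∈ s, m.lookup l = src.lookup l) ∧ ∀ l ∉ s, m.lookup l = none := by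
  classical
  obtain ⟨m, hm⟩ := exists_finmap s (fun l => (src.lookup l).getD d)
  refine ⟨m, keys_eq_of_lookup hm, fun l hl => ?_, fun l hl => by rw [hm, if_neg hl]⟩
  obtain ⟨w, hw⟩ := Finmap.mem_iff.mp (hs l hl)
  rw [hm, if_pos hl, hw]
  rfl

lemma exists_admissible (sx : ℕ → SVal) (sa : ℕ → Word) (S : Finset STerm) (w : Word) :
    ∃ ct : CTerm, ct.eval sa = w ∧
      ((∃ t ∈ S, ct = t.embed sx) ∨ ct = CTerm.const [] ∨
        ∃ w' : Word, ct = CTerm.const w' ∧ ∀ t ∈ S, (t.embed sx).eval sa ≠ w') := by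
  classical
  by_cases hex : ∃ t ∈ S, (t.embed sx).eval sa = w
  · obtain ⟨t, ht, hte⟩ := hex
    exact ⟨t.embed sx, hte, Or.inl ⟨t, ht, rfl⟩⟩
  · by_cases hw : w = []
    · exact ⟨CTerm.const [], by simp [CTerm.eval, hw], Or.inr (Or.inl rfl)⟩
    · push_neg at hex
      exact ⟨CTerm.const w, rfl, Or.inr (Or.inr ⟨w, rfl, hex⟩)⟩

/-- Symbolize a concrete heap with admissible symbolic values. -/
lemma exists_sym_heap (sx : ℕ → SVal) (sa : ℕ → Word) (h : Heap) (S : Finset STerm) :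
    ∃ H : SymHeap, HRel sa H h ∧
      ∀ (l : ℕ) (ct : CTerm), H.lookup l = some ct →
        (∃ t ∈ S, ct = t.embed sx) ∨ ct = CTerm.const [] ∨
          ∃ w' : Word, ct = CTerm.const w' ∧ ∀ t ∈ S, (t.embed sx).eval sa ≠ w' := by
  classical
  obtain ⟨H, hH⟩ := exists_finmap h.keys
    (fun l => Classical.choose (exists_admissible sx sa S ((h.lookup l).getD [])))
  refine ⟨H, fun l => ?_, fun l ct hct => ?_⟩
  · by_cases hl : l ∈ h
    · obtain ⟨w, hw⟩ := Finmap.mem_iff.mp hl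
      rw [hH l, if_pos (Finmap.mem_keys.mpr hl), hw]
      have := (Classical.choose_spec (exists_admissible sx sa S ((h.lookup l).getD []))).1
      rw [hw] at this
      simp only [Option.getD_some] at this
      simp [this]
    · rw [hH l, if_neg (fun hc => hl (Finmap.mem_keys.mp hc)),
        Finmap.lookup_eq_none.mpr hl]
      rfl
  · rw [hH l] at hct
    by_cases hl : l ∈ h.keys
    · rw [if_pos hl] at hct
      have := (Classical.choose_spec (exists_admissible sx sa S ((h.lookup l).getD []))).2
      have hc : Classical.choose
          (exists_admissible sx sa S ((h.lookup l).getD [])) = ct :=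
        Option.some_injective _ hct
      rwa [hc] at this
    · rw [if_neg hl] at hct
      exact absurd hct (by simp)

end HRel
/-- Main lemma: for a fixed assignment of sequence variables, satisfaction of
`φ` in the concrete heap is equivalent to truth of the reduced formula on the
corresponding symbolic heap. -/
lemma sat_iff_tsat (sx : ℕ → SVal) (sa : ℕ → Word) (φ : PFormula) :
    ∀ (H : SymHeap) (h : Heap), HRel sa H h →
      (PFormula.Sat sx sa φ h ↔ Tsat sx sa φ H) := by
  classical
  induction φ with
  | eqx t₁ t₂ => intro H h _; simp [PFormula.Sat, Tsat]
  | eqs t₁ t₂ => intro H h _; simp [PFormula.Sat, Tsat]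
  | fls => intro H h _; simp [PFormula.Sat, Tsat]
  | imp φ₁ φ₂ ih₁ ih₂ =>
      intro H h r
      simp only [PFormula.Sat, Tsat]
      exact imp_congr (ih₁ H h r) (ih₂ H h r)
  | emp =>
      intro H h r
      simp only [PFormula.Sat, Tsat]
      constructor
      · rintro rfl
        apply Finmap.ext_lookup
        intro l
        have hr := r l
        rw [Finmap.lookup_empty] at hr
        rw [Finmap.lookup_empty]
        cases hc : H.lookup l with
        | none => rfl
        | some ct => rw [hc] at hr; simp at hr
      · rintro rfl
        apply Finmap.ext_lookup
        intro l
        have hr := r l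
        rw [Finmap.lookup_empty] at hr
        simp only [Option.map_none] at hr
        rw [Finmap.lookup_empty, ← hr]
  | pto x t =>
      intro H h r
      simp only [PFormula.Sat, Tsat]
      constructor
      · rintro ⟨l, hsx, rfl⟩
        refine ⟨l, hsx, ?_, ?_⟩
        · rw [r.keys, Finmap.keys_singleton]
        · have hr := r l
          rw [Finmap.lookup_singleton_eq] at hr
          obtain ⟨ct, hct, hcte⟩ := Option.map_eq_some_iff.mp hr
          exact ⟨ct, hct, by rw [hcte, embed_eval]⟩
      · rintro ⟨l, hsx, hk, ct, hct, hcte⟩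
        refine ⟨l, hsx, ?_⟩
        apply Finmap.ext_lookup
        intro a
        by_cases hal : a = l
        · subst hal
          rw [Finmap.lookup_singleton_eq, ← r a, hct]
          simp only [Option.map_some]
          rw [hcte, embed_eval]
        · rw [show (Finmap.singleton l (STerm.eval sx sa t) : Heap).lookup a = none
              from Finmap.lookup_eq_none.mpr
                (by rw [Finmap.mem_singleton]; exact hal), ← r a]
          have hnm : a ∉ H := by
            intro hc
            have hmem := Finmap.mem_keys.mpr hc
            rw [hk, Finset.mem_singleton] at hmem
            exact hal hmem
          rw [Finmap.lookup_eq_none.mpr hnm]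
          rfl
  | star φ₁ φ₂ ih₁ ih₂ =>
      intro H h r
      simp only [PFormula.Sat, Tsat]
      constructor
      · rintro ⟨h₁, h₂, hdis, rfl, hs₁, hs₂⟩
        have hsub₁ : ∀ l ∈ h₁.keys, l ∈ H := fun l hl =>
          (r.mem l).mpr (Finmap.mem_union.mpr (Or.inl (Finmap.mem_keys.mp hl)))
        have hsub₂ : ∀ l ∈ h₂.keys, l ∈ H := fun l hl =>
          (r.mem l).mpr (Finmap.mem_union.mpr (Or.inr (Finmap.mem_keys.mp hl)))
        obtain ⟨H₁, hk₁, hl₁, hn₁⟩ := exists_restrict (CTerm.const []) H h₁.keys hsub₁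
        obtain ⟨H₂, hk₂, hl₂, hn₂⟩ := exists_restrict (CTerm.const []) H h₂.keys hsub₂
        have r₁ : HRel sa H₁ h₁ := by
          intro l
          by_cases hl : l ∈ h₁
          · rw [hl₁ l (Finmap.mem_keys.mpr hl), r l, Finmap.lookup_union_left hl]
          · rw [hn₁ l (fun hc => hl (Finmap.mem_keys.mp hc)),
              Finmap.lookup_eq_none.mpr hl]
            rfl
        have r₂ : HRel sa H₂ h₂ := by
          intro l
          by_cases hl : l ∈ h₂
          · rw [hl₂ l (Finmap.mem_keys.mpr hl), r l,
              Finmap.lookup_union_right (fun hc => hdis l hc hl)]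
          · rw [hn₂ l (fun hc => hl (Finmap.mem_keys.mp hc)),
              Finmap.lookup_eq_none.mpr hl]
            rfl
        have hdis' : H₁.Disjoint H₂ := by
          intro l hm₁ hm₂
          rw [← Finmap.mem_keys, hk₁, Finmap.mem_keys] at hm₁
          rw [← Finmap.mem_keys, hk₂, Finmap.mem_keys] at hm₂
          exact hdis l hm₁ hm₂
        have hHuni : H = H₁ ∪ H₂ := by
          apply Finmap.ext_lookup
          intro l
          by_cases hm₁ : l ∈ h₁
          · rw [Finmap.lookup_union_left
              (by rw [← Finmap.mem_keys, hk₁, Finmap.mem_keys]; exact hm₁),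
              hl₁ l (Finmap.mem_keys.mpr hm₁)]
          · rw [Finmap.lookup_union_right
              (by rw [← Finmap.mem_keys, hk₁, Finmap.mem_keys]; exact hm₁)]
            by_cases hm₂ : l ∈ h₂
            · rw [hl₂ l (Finmap.mem_keys.mpr hm₂)]
            · rw [hn₂ l (fun hc => hm₂ (Finmap.mem_keys.mp hc)),
                Finmap.lookup_eq_none]
              intro hc
              rcases Finmap.mem_union.mp ((r.mem l).mp hc) with hd | hd
              · exact hm₁ hd
              · exact hm₂ hd
        exact ⟨H₁, H₂, hdis', hHuni, (ih₁ H₁ h₁ r₁).mp hs₁, (ih₂ H₂ h₂ r₂).mp hs₂⟩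
      · rintro ⟨H₁, H₂, hdis, rfl, ht₁, ht₂⟩
        obtain ⟨h₁, r₁⟩ := exists_eval_heap sa H₁
        obtain ⟨h₂, r₂⟩ := exists_eval_heap sa H₂
        have hdis' : h₁.Disjoint h₂ := fun l hm₁ hm₂ =>
          hdis l ((r₁.mem l).mpr hm₁) ((r₂.mem l).mpr hm₂)
        exact ⟨h₁, h₂, hdis', HRel.unique r (r₁.union r₂),
          (ih₁ H₁ h₁ r₁).mpr ht₁, (ih₂ H₂ h₂ r₂).mpr ht₂⟩
  | wand φ₁ φ₂ ih₁ ih₂ =>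
      intro H h r
      simp only [PFormula.Sat, Tsat]
      constructor
      · intro hsat Hφ hdis _ _ ht₁
        obtain ⟨hφ, rφ⟩ := exists_eval_heap sa Hφ
        have hd : hφ.Disjoint h := fun l hm₁ hm₂ =>
          hdis l ((rφ.mem l).mpr hm₁) ((r.mem l).mpr hm₂)
        exact (ih₂ (Hφ ∪ H) (hφ ∪ h) (rφ.union r)).mp
          (hsat hφ hd ((ih₁ Hφ hφ rφ).mpr ht₁))
      · intro htsat h₁ hdis hs₁
        have hLmem : ∀ x ∈ φ₁.fvx ∪ φ₂.fvx, ∀ l, sx x = Sum.inl l →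
            l ∈ locSet sx (φ₁.fvx ∪ φ₂.fvx) := fun x hx l hsx =>
          mem_locSet.mpr ⟨x, hx, hsx⟩
        have hpinf : (setOf fun l' => l' ∉ H.keys ∧
            ∀ x ∈ φ₁.fvx ∪ φ₂.fvx, sx x ≠ Sum.inl l').Infinite := by
          have hsub : (↑(H.keys ∪ locSet sx (φ₁.fvx ∪ φ₂.fvx)) : Set ℕ)ᶜ ⊆
              setOf fun l' => l' ∉ H.keys ∧
                ∀ x ∈ φ₁.fvx ∪ φ₂.fvx, sx x ≠ Sum.inl l' := by
            intro l hl
            simp only [Set.mem_compl_iff, Finset.coe_union, Set.mem_union,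
              Finset.mem_coe] at hl
            push_neg at hl
            exact ⟨hl.1, fun x hx hc => hl.2 (mem_locSet.mpr ⟨x, hx, hc⟩)⟩
          exact Set.Infinite.mono hsub
            (Set.Finite.infinite_compl (Finset.finite_toSet _))
        obtain ⟨fr, hfrcard, hfrmem⟩ := exists_subset_firstN _ hpinf
          (max φ₁.sz φ₂.sz)
          (min (outCard (locSet sx (φ₁.fvx ∪ φ₂.fvx)) h₁) (max φ₁.sz φ₂.sz))
          (min_le_right _ _)
        have hfrp : ∀ l ∈ fr, l ∉ H.keys ∧
            ∀ x ∈ φ₁.fvx ∪ φ₂.fvx, sx x ≠ Sum.inl l := fun l hl => (hfrmem l hl).1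
        have hfrL : ∀ l ∈ fr, l ∉ locSet sx (φ₁.fvx ∪ φ₂.fvx) := by
          intro l hl hc'
          obtain ⟨x, hx, hsx⟩ := mem_locSet.mp hc'
          exact (hfrp l hl).2 x hx hsx
        obtain ⟨h₁', hL₁', hc₁', hmem₁'⟩ :=
          copy_heap (locSet sx (φ₁.fvx ∪ φ₂.fvx)) h₁ fr hfrL
        have hdis₁' : h₁'.Disjoint h := by
          intro l hl hlh
          rcases hmem₁' l hl with ⟨hlL, hlsrc⟩ | hlf
          · exact hdis l hlsrc hlh
          · exact (hfrp l hlf).1 (by rw [r.keys]; exact Finmap.mem_keys.mpr hlh)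
        have h1m : φ₁.sz ≤ max φ₁.sz φ₂.sz := le_max_left _ _
        have h2m : φ₂.sz ≤ max φ₁.sz φ₂.sz := le_max_right _ _
        have hhe₁ : HEquiv (locSet sx (φ₁.fvx ∪ φ₂.fvx)) φ₁.sz h₁ h₁' := by
          refine ⟨fun l hl => (hL₁' l hl).symm, ?_⟩
          rw [hc₁', hfrcard]
          omega
        have hL₁cond : ∀ x ∈ φ₁.fvx, ∀ l, sx x = Sum.inl l →
            l ∈ locSet sx (φ₁.fvx ∪ φ₂.fvx) := fun x hx =>
          hLmem x (Finset.mem_union_left _ hx)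
        have hL₂cond : ∀ x ∈ φ₂.fvx, ∀ l, sx x = Sum.inl l →
            l ∈ locSet sx (φ₁.fvx ∪ φ₂.fvx) := fun x hx =>
          hLmem x (Finset.mem_union_right _ hx)
        have hs₁' : PFormula.Sat sx sa φ₁ h₁' :=
          (sat_equiv sx sa φ₁ _ hL₁cond φ₁.sz le_rfl h₁ h₁' hhe₁).mp hs₁
        obtain ⟨Hφ, rφ, hadm⟩ := exists_sym_heap sx sa h₁' (φ₁.seqTerms ∪ φ₂.seqTerms)
        have hdisH : Hφ.Disjoint H := fun l hm₁ hm₂ =>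
          hdis₁' l ((rφ.mem l).mp hm₁) ((r.mem l).mp hm₂)
        have hdom : ∀ l ∈ Hφ.keys,
            l ∈ firstN (setOf fun l' => l' ∉ H.keys ∧
              ∀ x ∈ φ₁.fvx ∪ φ₂.fvx, sx x ≠ Sum.inl l') (max φ₁.sz φ₂.sz) ∨
            ∃ x ∈ φ₁.fvx ∪ φ₂.fvx, sx x = Sum.inl l := by
          intro l hl
          rw [rφ.keys, Finmap.mem_keys] at hl
          rcases hmem₁' l hl with ⟨hlL, _⟩ | hlf
          · exact Or.inr (mem_locSet.mp hlL)
          · exact Or.inl (hfrmem l hlf)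
        have ht₁ : Tsat sx sa φ₁ Hφ := (ih₁ Hφ h₁' rφ).mp hs₁'
        have ht₂ : Tsat sx sa φ₂ (Hφ ∪ H) := htsat Hφ hdisH hdom hadm ht₁
        have hs₂' : PFormula.Sat sx sa φ₂ (h₁' ∪ h) :=
          (ih₂ (Hφ ∪ H) (h₁' ∪ h) (rφ.union r)).mpr ht₂
        have hhe₂ : HEquiv (locSet sx (φ₁.fvx ∪ φ₂.fvx)) φ₂.sz (h₁' ∪ h) (h₁ ∪ h) := by
          constructor
          · intro l hl
            rw [lookup_union, lookup_union, hL₁' l hl]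
          · rw [outCard_union hdis₁', outCard_union hdis, hc₁', hfrcard]
            omega
        exact (sat_equiv sx sa φ₂ _ hL₂cond φ₂.sz le_rfl (h₁' ∪ h) (h₁ ∪ h) hhe₂).mp hs₂'

/-- Correctness of the reduction `T`: given the stack `sx` and the (finite)
heap `h`, represented symbolically by `H` (same domain, constant values),
there is an assignment of the sequence variables satisfying `φ` in the model
`(sx, ·, h)` iff the reduced quantifier-free sequence formula `T(sx, h, φ)`
is satisfiable. -/
theorem reduction_to_sequence_logic_correct
    (sx : ℕ → SVal) (h : Heap) (H : SymHeap)
    (hkeys : H.keys = h.keys)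
    (hvals : ∀ (l : ℕ) (w : Word), h.lookup l = some w →
      H.lookup l = some (CTerm.const w))
    (φ : PFormula) :
    (∃ sa : ℕ → Word, PFormula.Sat sx sa φ h) ↔
      (∃ sa : ℕ → Word, Tsat sx sa φ H) := by
  have r : ∀ sa : ℕ → Word, HRel sa H h := by
    intro sa l
    cases hl : h.lookup l with
    | some w => rw [hvals l w hl]; rfl
    | none =>
        have hm : l ∉ h := Finmap.lookup_eq_none.mp hl
        have hm' : l ∉ H := by
          rw [← Finmap.mem_keys, hkeys, Finmap.mem_keys]
          exact hm
        rw [Finmap.lookup_eq_none.mpr hm']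
        rfl
  exact exists_congr fun sa => sat_iff_tsat sx sa φ H h (r sa)
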